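/- Let π be a profinite topological group and let U be the forgetful functor from the category of finite discrete sets endowed with a continuous left π-action to the category of finite sets. Then the canonical group homomorphism π → Aut(U), sending g ∈ π to the natural automorphism of U acting by g on each finite π-set, is an isomorphism of topological groups (where Aut(U) carries the topology induced from the product of the discrete groups Aut(U(X)) over all finite continuous π-sets X). -/

import Mathlib

/-!
STATEMENT 3: For a profinite group π, the canonical homomorphism from π to the automorphism
group of the forgetful functor U from finite continuous π-sets to finite sets is an
isomorphism of topological groups (Aut U carrying the topology induced from the product of
the discrete groups Aut (U(X))).
-/

open CategoryTheory PreGaloisCategory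

universe u

/-- The category of finite (discrete) sets endowed with a continuous left action of a
topological group `G`. -/
abbrev ContFinAction (G : Type u) [Group G] [TopologicalSpace G] : Type (u + 1) :=
  CategoryTheory.ObjectProperty.FullSubcategory
    (fun X : Action FintypeCat.{u} G =>
      letI : TopologicalSpace X.V := ⊥
      ContinuousSMul G X.V)

/-- The forgetful functor from continuous finite `G`-sets to finite sets. -/
def forgetContFinAction (G : Type u) [Group G] [TopologicalSpace G] :
    ContFinAction G ⥤ FintypeCat.{u} :=
  ObjectProperty.ι _ ⋙ forget₂ (Action FintypeCat.{u} G) FintypeCat.{u}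

instance (G : Type u) [Group G] [TopologicalSpace G] (X : ContFinAction G) :
    MulAction G ((forgetContFinAction G).obj X) :=
  inferInstanceAs (MulAction G X.obj.V)

instance (G : Type u) [Group G] [TopologicalSpace G] :
    IsNaturalSMul (forgetContFinAction G) G where
  naturality g {X Y} f x := by
    show f.hom (g • x) = g • f.hom x
    have h := congrArg (fun φ : X.obj.V ⟶ Y.obj.V => φ x) (f.hom.comm g)
    simp only [FintypeCat.comp_apply] at h
    exact h

/-- The canonical group homomorphism from `G` to the automorphism group of the forgetful
functor from finite continuous `G`-sets to finite sets, sending `g` to the natural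
automorphism acting by `g` on each finite continuous `G`-set. -/
noncomputable def canonicalToAut (G : Type u) [Group G] [TopologicalSpace G] :
    G →* Aut (forgetContFinAction G) :=
  toAut (forgetContFinAction G) G

set_option linter.unusedSectionVars false

namespace StmtAux

variable {G : Type u} [Group G] [TopologicalSpace G]

lemma continuousSMul_of_isOpen {X : Type*} [TopologicalSpace X] [DiscreteTopology X]
    [MulAction G X] (h : ∀ x y : X, IsOpen {g : G | g • x = y}) : ContinuousSMul G X := by
  constructor
  rw [continuous_discrete_rng]
  intro y
  have : (fun p : G × X => p.1 • p.2) ⁻¹' {y} =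
      ⋃ d : X, {g : G | g • d = y} ×ˢ ({d} : Set X) := by
    ext ⟨g, d⟩
    constructor
    · intro hg
      exact Set.mem_iUnion.mpr ⟨d, by simpa using hg⟩
    · intro hg
      obtain ⟨d', hd'⟩ := Set.mem_iUnion.mp hg
      simp only [Set.mem_prod, Set.mem_setOf_eq, Set.mem_singleton_iff] at hd'
      simpa [hd'.2] using hd'.1
  rw [this]
  exact isOpen_iUnion fun d => (h d y).prod (isOpen_discrete _)

lemma isOpen_smul_eq {X : Type*} [TopologicalSpace X] [DiscreteTopology X] [MulAction G X]
    [ContinuousSMul G X] (x y : X) : IsOpen {g : G | g • x = y} := by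
  have hc : Continuous fun g : G => g • x := continuous_id.smul continuous_const
  exact hc.isOpen_preimage {y} (isOpen_discrete _)

variable [IsTopologicalGroup G]

lemma isOpen_quot_smul_eq (N : OpenNormalSubgroup G) (x y : G ⧸ N.toSubgroup) :
    IsOpen {g : G | g • x = y} := by
  induction x using QuotientGroup.induction_on with | H x =>
  induction y using QuotientGroup.induction_on with | H y =>
  have : {g : G | g • (QuotientGroup.mk x : G ⧸ N.toSubgroup) = QuotientGroup.mk y} =
      (fun g : G => (g * x)⁻¹ * y) ⁻¹' (N : Set G) := by
    ext g
    simp only [Set.mem_setOf_eq, Set.mem_preimage, SetLike.mem_coe]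
    rw [MulAction.Quotient.smul_mk, smul_eq_mul, QuotientGroup.eq]
    rfl
  rw [this]
  exact (by fun_prop : Continuous fun g : G => (g * x)⁻¹ * y).isOpen_preimage _ N.isOpen


lemma quotObj_property [CompactSpace G] (N : OpenNormalSubgroup G) :
    @ContinuousSMul G (G ⧸ N.toSubgroup) _ _ ⊥ :=
  letI : TopologicalSpace (G ⧸ N.toSubgroup) := ⊥
  haveI : DiscreteTopology (G ⧸ N.toSubgroup) := ⟨rfl⟩
  continuousSMul_of_isOpen (isOpen_quot_smul_eq N)

variable (G) in
/-- The quotient `G ⧸ N` as an object of `ContFinAction G`. -/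
noncomputable def quotObj [CompactSpace G] (N : OpenNormalSubgroup G) : ContFinAction G :=
  haveI : Fintype (G ⧸ N.toSubgroup) := Fintype.ofFinite _
  { obj := Action.FintypeCat.ofMulAction G (FintypeCat.of (G ⧸ N.toSubgroup))
    property := by exact quotObj_property N }

variable [CompactSpace G]

lemma quotObj_smul (N : OpenNormalSubgroup G) (g : G) (x : (quotObj G N).obj.V) :
    g • x = (g • (x : G ⧸ N.toSubgroup) : G ⧸ N.toSubgroup) := rfl

/-- The projection `G ⧸ N ⟶ G ⧸ M` as a morphism of `ContFinAction G`. -/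
noncomputable def quotHom {N M : OpenNormalSubgroup G} (h : N ≤ M) :
    quotObj G N ⟶ quotObj G M where
  hom :=
  { hom := FintypeCat.homMk (QuotientGroup.map N.toSubgroup M.toSubgroup (MonoidHom.id G)
    (fun x hx => h hx) : (G ⧸ N.toSubgroup) → (G ⧸ M.toSubgroup))
    comm g := by
      ext x
      induction x using QuotientGroup.induction_on with | H x => rfl }


lemma isOpen_smul_eq_obj (X : ContFinAction G) (x y : X.obj.V) :
    IsOpen {g : G | g • x = y} := by
  letI : TopologicalSpace X.obj.V := ⊥
  haveI : DiscreteTopology X.obj.V := ⟨rfl⟩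
  haveI : ContinuousSMul G X.obj.V := X.property
  exact isOpen_smul_eq x y

/-- The open normal subgroup acting trivially on a finite continuous `G`-set. -/
noncomputable def actKer (X : ContFinAction G) : OpenNormalSubgroup G where
  toSubgroup := MonoidHom.ker (MulAction.toPermHom G X.obj.V)
  isNormal' := MonoidHom.normal_ker _
  isOpen' := by
    have h : ((MonoidHom.ker (MulAction.toPermHom G X.obj.V) : Subgroup G) : Set G) =
        ⋂ y : X.obj.V, {g : G | g • y = y} := by
      ext g
      simp [MonoidHom.mem_ker, Equiv.ext_iff]
    show IsOpen ((MonoidHom.ker (MulAction.toPermHom G X.obj.V) : Subgroup G) : Set G)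
    rw [h]
    exact isOpen_iInter_of_finite fun y => isOpen_smul_eq_obj X y y

lemma actKer_smul {X : ContFinAction G} {n : G} (hn : n ∈ actKer X) (x : X.obj.V) :
    n • x = x := by
  have h1 : MulAction.toPermHom G X.obj.V n = 1 := hn
  calc n • x = (MulAction.toPermHom G X.obj.V n) x := rfl
  _ = x := by rw [h1]; rfl

/-- The `G`-map `G ⧸ N ⟶ X` sending `h • N` to `h • x`, for `N` contained in the
kernel of the action. -/
noncomputable def toObjHom (X : ContFinAction G) (x : X.obj.V) {N : OpenNormalSubgroup G}
    (hN : N ≤ actKer X) : quotObj G N ⟶ X where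
  hom :=
  { hom := FintypeCat.homMk fun c => Quotient.liftOn' (c : G ⧸ N.toSubgroup) (fun h => h • x) (by
    intro a b hab
    have hm : a⁻¹ * b ∈ N := QuotientGroup.leftRel_apply.mp hab
    show a • x = b • x
    calc a • x = a • ((a⁻¹ * b) • x) := by rw [actKer_smul (hN hm)]
    _ = b • x := by rw [← mul_smul, mul_inv_cancel_left])
    comm g := by
      have gg : G := g
      ext c
      induction c using QuotientGroup.induction_on with | H h =>
      show ((show G from g) * h) • x = (show G from g) • (h • x)
      rw [mul_smul] }

lemma toObjHom_mk (X : ContFinAction G) (x : X.obj.V) {N : OpenNormalSubgroup G}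
    (hN : N ≤ actKer X) (h : G) :
    (toObjHom X x hN).hom.hom (QuotientGroup.mk h : G ⧸ N.toSubgroup) = h • x := rfl


section Main

variable (G)

lemma nontrivial_aux [T2Space G] [TotallyDisconnectedSpace G] (g : G)
    (h : ∀ (X : ContFinAction G) (x : (forgetContFinAction G).obj X), g • x = x) : g = 1 := by
  by_contra hg
  have h1mem : (1 : G) ∈ ({g} : Set G)ᶜ := fun hmem => hg (Set.mem_singleton_iff.mp hmem).symm
  obtain ⟨V, hV, h1V, hVU⟩ :=
    compact_exists_isClopen_in_isOpen (isClosed_singleton (x := g)).isOpen_compl h1mem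
  obtain ⟨H, hH⟩ := IsTopologicalGroup.exist_openNormalSubgroup_sub_clopen_nhds_of_one hV h1V
  have h2 : g • (QuotientGroup.mk 1 : G ⧸ H.toSubgroup) = QuotientGroup.mk 1 :=
    h (quotObj G H) (QuotientGroup.mk 1)
  rw [MulAction.Quotient.smul_mk, smul_eq_mul, mul_one] at h2
  have h3 : g ∈ H.toSubgroup := by
    rwa [show (QuotientGroup.mk 1 : G ⧸ H.toSubgroup) = 1 from rfl,
      QuotientGroup.eq_one_iff] at h2
  exact hVU (hH h3) rfl

lemma surj_aux : Function.Surjective (canonicalToAut G) := by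
  intro t
  let F := forgetContFinAction G
  let c : ∀ N : OpenNormalSubgroup G, G ⧸ N.toSubgroup :=
    fun N => t.hom.app (quotObj G N) (QuotientGroup.mk 1)
  let S : OpenNormalSubgroup G → Set G := fun N => QuotientGroup.mk ⁻¹' {c N}
  have hc : ∀ {N M : OpenNormalSubgroup G} (h : N ≤ M),
      QuotientGroup.map N.toSubgroup M.toSubgroup (MonoidHom.id G) (fun x hx => h hx) (c N)
        = c M := by
    intro N M h
    have nat := ConcreteCategory.congr_hom (t.hom.naturality (quotHom h)) (QuotientGroup.mk (1 : G))
    exact nat.symm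
  have hmono : ∀ {N M : OpenNormalSubgroup G}, N ≤ M → S N ⊆ S M := by
    intro N M h g hg
    have hg' : (QuotientGroup.mk g : G ⧸ N.toSubgroup) = c N := hg
    show (QuotientGroup.mk g : G ⧸ M.toSubgroup) = c M
    rw [← hc h, ← hg']
    rfl
  have hne : ∀ N, (S N).Nonempty := by
    intro N
    obtain ⟨g₀, hg₀⟩ := QuotientGroup.mk_surjective (c N)
    exact ⟨g₀, hg₀⟩
  have hclosed : ∀ N, IsClosed (S N) := by
    intro N
    obtain ⟨z, hz⟩ := QuotientGroup.mk_surjective (c N)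
    have : S N = (fun g : G => g⁻¹ * z) ⁻¹' (N.toSubgroup : Set G) := by
      ext g
      show (QuotientGroup.mk g : G ⧸ N.toSubgroup) = c N ↔ _
      rw [← hz, QuotientGroup.eq]
      rfl
    rw [this]
    exact (Subgroup.isClosed_of_isOpen _ N.isOpen).preimage (by fun_prop)
  have hdir : Directed (· ⊇ ·) S :=
    fun N M => ⟨N ⊓ M, hmono inf_le_left, hmono inf_le_right⟩
  haveI : Nonempty (OpenNormalSubgroup G) := ⟨⟨⟨⊤, isOpen_univ⟩, inferInstance⟩⟩
  obtain ⟨g, hg⟩ := IsCompact.nonempty_iInter_of_directed_nonempty_isCompact_isClosed S hdir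
    hne (fun N => (hclosed N).isCompact) hclosed
  refine ⟨g, ?_⟩
  ext X x
  have hgX : g ∈ S (actKer X) := Set.mem_iInter.mp hg _
  have e3 : (QuotientGroup.mk g : G ⧸ (actKer X).toSubgroup) = c (actKer X) := hgX
  let f := toObjHom X x (le_refl (actKer X))
  have nat := ConcreteCategory.congr_hom (t.hom.naturality f) (QuotientGroup.mk (1 : G))
  have e2 : f.hom.hom (QuotientGroup.mk (1 : G)) = x := by
    exact (toObjHom_mk X x _ 1).trans (one_smul G x)
  have e4 : f.hom.hom (c (actKer X)) = g • x := by rw [← e3]; exact toObjHom_mk X x _ g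
  calc ((canonicalToAut G) g).hom.app X x = g • x := rfl
    _ = (show (forgetContFinAction G).obj X from f.hom.hom (c (actKer X))) := e4.symm
    _ = F.map f (t.hom.app (quotObj G (actKer X)) (QuotientGroup.mk 1)) := rfl
    _ = t.hom.app X (F.map f (QuotientGroup.mk 1)) := nat.symm
    _ = t.hom.app X x := congrArg (t.hom.app X) e2

lemma cont_aux : Continuous (canonicalToAut G) := by
  let F := forgetContFinAction G
  apply continuous_induced_rng.mpr
  refine continuous_pi fun X => ?_
  rw [continuous_discrete_rng]
  intro σ
  have key : ((fun g : G => autEmbedding F (canonicalToAut G g) X) ⁻¹' {σ}) =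
      ⋂ x : X.obj.V, {g : G | g • x = σ.hom x} := by
    ext g
    simp only [Set.mem_preimage, Set.mem_singleton_iff, Set.mem_iInter, Set.mem_setOf_eq]
    constructor
    · intro hσ x
      rw [← hσ]
      rfl
    · intro hx
      refine Iso.ext (FintypeCat.hom_ext _ _ fun x => hx x)
  exact key ▸ isOpen_iInter_of_finite fun x => isOpen_smul_eq_obj X x (σ.hom x)

end Main

end StmtAux

theorem stmt_3 (G : Type u) [Group G] [TopologicalSpace G] [IsTopologicalGroup G]
    [CompactSpace G] [T2Space G] [TotallyDisconnectedSpace G] :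
    Function.Bijective (canonicalToAut G) ∧ IsHomeomorph (canonicalToAut G) := by
  have hbij : Function.Bijective (canonicalToAut G) :=
    ⟨toAut_injective_of_non_trivial (forgetContFinAction G) G
      (fun g h => StmtAux.nontrivial_aux G g h), StmtAux.surj_aux G⟩
  exact ⟨hbij, isHomeomorph_iff_continuous_bijective.mpr ⟨StmtAux.cont_aux G, hbij⟩⟩
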